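/- arXiv:1803.04673 — 3 statements merged into one kernel-verified Lean document; each statement's English description precedes it below -/
import Mathlib

section
/- Assume U is nonempty and there exists x̄ ∈ X with p(x̄) ∈ ℝ (i.e., dom p ≠ ∅), and let x* ∈ X*. The following statements are equivalent: (i) strong robust duality holds at x*, i.e., there exist u ∈ U and y_u* ∈ Y_u* with p*(x*) = F_u*(x*, y_u*) = q(x*); (ii) there exist u ∈ U and y_u* ∈ Y_u* such that (M^ε p)(x*) = B^ε_{(u,y_u*)}(x*) for all ε ≥ 0; (iii) there exist ε̄ > 0, u ∈ U and y_u* ∈ Y_u* such that (M^ε p)(x*) = B^ε_{(u,y_u*)}(x*) for all ε ∈ (0, ε̄). -/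
noncomputable section

namespace RobustDuality

/-- The set of `ε`-minimizers of an extended-real-valued function `h`:
`{z | h z ∈ ℝ ∧ h z ≤ inf h + ε}` (empty when `inf h ∉ ℝ`). -/
def epsArgmin {Z : Type*} (h : Z → EReal) (ε : ℝ) : Set Z :=
  {z | (∃ r : ℝ, h z = (r : EReal)) ∧ h z ≤ (⨅ w, h w) + (ε : EReal)}

variable {X : Type*} [AddCommGroup X] [Module ℝ X] [TopologicalSpace X]
  [IsTopologicalAddGroup X] [ContinuousSMul ℝ X] [LocallyConvexSpace ℝ X] [T2Space X]

/-- `(M^ε h)(x*) := ε-argmin (h - x*)` for `h : X → EReal` and `x* ∈ X*`. -/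
def M1 (h : X → EReal) (ε : ℝ) (xs : X →L[ℝ] ℝ) : Set X :=
  epsArgmin (fun x => h x - ((xs x : ℝ) : EReal)) ε

/-- Fenchel conjugate of `h : X → EReal`. -/
def conj1 (h : X → EReal) (xs : X →L[ℝ] ℝ) : EReal :=
  ⨆ x : X, ((xs x : ℝ) : EReal) - h x

/-- `ε`-subdifferential of `h : X → EReal` at `a`. -/
def epsSubdiff1 (h : X → EReal) (ε : ℝ) (a : X) : Set (X →L[ℝ] ℝ) :=
  {xs | (∃ r : ℝ, h a = (r : EReal)) ∧
    ∀ x, h a + ((xs x - xs a - ε : ℝ) : EReal) ≤ h x}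

section Pair

variable {Yu : Type*} [AddCommGroup Yu] [Module ℝ Yu] [TopologicalSpace Yu]
  [IsTopologicalAddGroup Yu] [ContinuousSMul ℝ Yu] [LocallyConvexSpace ℝ Yu] [T2Space Yu]

/-- Fenchel conjugate of `F : X × Y → EReal` at `(x*, y*)`. -/
def conj2 (F : X × Yu → EReal) (xs : X →L[ℝ] ℝ) (ys : Yu →L[ℝ] ℝ) : EReal :=
  ⨆ z : X × Yu, ((xs z.1 + ys z.2 : ℝ) : EReal) - F z

/-- `(M^ε F)(x*, y*) := ε-argmin (F - (x*, y*))`. -/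
def M2 (F : X × Yu → EReal) (ε : ℝ) (xs : X →L[ℝ] ℝ) (ys : Yu →L[ℝ] ℝ) : Set (X × Yu) :=
  epsArgmin (fun z => F z - ((xs z.1 + ys z.2 : ℝ) : EReal)) ε

/-- `ε`-subdifferential of `F : X × Y → EReal` at `a`, as a set of dual pairs. -/
def epsSubdiff2 (F : X × Yu → EReal) (ε : ℝ) (a : X × Yu) :
    Set ((X →L[ℝ] ℝ) × (Yu →L[ℝ] ℝ)) :=
  {zs | (∃ r : ℝ, F a = (r : EReal)) ∧
    ∀ z, F a + ((zs.1 z.1 + zs.2 z.2 - zs.1 a.1 - zs.2 a.2 - ε : ℝ) : EReal) ≤ F z}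

end Pair

variable {U : Type*} {Y : U → Type*} [∀ u, AddCommGroup (Y u)] [∀ u, Module ℝ (Y u)]
  [∀ u, TopologicalSpace (Y u)] [∀ u, IsTopologicalAddGroup (Y u)]
  [∀ u, ContinuousSMul ℝ (Y u)] [∀ u, LocallyConvexSpace ℝ (Y u)] [∀ u, T2Space (Y u)]

/-- The robust objective `p := sup_{u ∈ U} F_u (·, 0_u)`. -/
def pRob (F : ∀ u, X × Y u → EReal) (x : X) : EReal := ⨆ u, F u (x, 0)

/-- `q := inf over u ∈ U and y* ∈ Y_u* of F_u*(·, y*)`. -/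
def qRob (F : ∀ u, X × Y u → EReal) (xs : X →L[ℝ] ℝ) : EReal :=
  ⨅ (u : U) (ys : Y u →L[ℝ] ℝ), conj2 (F u) xs ys

/-- `S^ε(x*) := {x : p x ∈ ℝ ∧ p x - ⟨x*, x⟩ ≤ -q x* + ε}`. -/
def Sset (F : ∀ u, X × Y u → EReal) (ε : ℝ) (xs : X →L[ℝ] ℝ) : Set X :=
  {x | (∃ r : ℝ, pRob F x = (r : EReal)) ∧
    pRob F x - ((xs x : ℝ) : EReal) ≤ -qRob F xs + (ε : EReal)}

/-- `J^ε(u) := {x : p x ∈ ℝ ∧ p x ≤ F_u(x, 0) + ε}`. -/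
def Jset (F : ∀ u, X × Y u → EReal) (ε : ℝ) (u : U) : Set X :=
  {x | (∃ r : ℝ, pRob F x = (r : EReal)) ∧ pRob F x ≤ F u (x, 0) + (ε : EReal)}

/-- `A^{(ε₁,ε₂)}_{(u,y*)}(x*) := {x ∈ J^{ε₁}(u) : (x, 0) ∈ (M^{ε₂}F_u)(x*, y*)}`. -/
def Aset (F : ∀ u, X × Y u → EReal) (ε₁ ε₂ : ℝ) (u : U) (ys : Y u →L[ℝ] ℝ)
    (xs : X →L[ℝ] ℝ) : Set X :=
  {x | x ∈ Jset F ε₁ u ∧ (x, (0 : Y u)) ∈ M2 (F u) ε₂ xs ys}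

/-- `𝒜^ε(x*)`. -/
def calA (F : ∀ u, X × Y u → EReal) (ε : ℝ) (xs : X →L[ℝ] ℝ) : Set X :=
  ⋂ (η : ℝ) (_ : 0 < η),
    ⋃ (u : U) (ys : Y u →L[ℝ] ℝ) (ε₁ : ℝ) (ε₂ : ℝ)
      (_ : 0 ≤ ε₁) (_ : 0 ≤ ε₂) (_ : ε₁ + ε₂ = ε + η), Aset F ε₁ ε₂ u ys xs

/-- `B^ε_{(u,y*)}(x*)`. -/
def Bset (F : ∀ u, X × Y u → EReal) (ε : ℝ) (u : U) (ys : Y u →L[ℝ] ℝ)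
    (xs : X →L[ℝ] ℝ) : Set X :=
  ⋃ (ε₁ : ℝ) (ε₂ : ℝ) (_ : 0 ≤ ε₁) (_ : 0 ≤ ε₂) (_ : ε₁ + ε₂ = ε),
    Aset F ε₁ ε₂ u ys xs

/-- `B^ε(x*) := ⋃_{u, y*} B^ε_{(u,y*)}(x*)`. -/
def BsetAll (F : ∀ u, X × Y u → EReal) (ε : ℝ) (xs : X →L[ℝ] ℝ) : Set X :=
  ⋃ (u : U) (ys : Y u →L[ℝ] ℝ), Bset F ε u ys xs

/-- `I^ε(x)`: the set of `ε`-active indices at `x`. -/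
def Iset (F : ∀ u, X × Y u → EReal) (ε : ℝ) (x : X) : Set U :=
  {u | (∃ r : ℝ, pRob F x = (r : EReal)) ∧ pRob F x - (ε : EReal) ≤ F u (x, 0)}

/-- `C^ε(x)`. -/
def Cset (F : ∀ u, X × Y u → EReal) (ε : ℝ) (x : X) : Set (X →L[ℝ] ℝ) :=
  ⋂ (η : ℝ) (_ : 0 < η),
    ⋃ (ε₁ : ℝ) (ε₂ : ℝ) (_ : 0 ≤ ε₁) (_ : 0 ≤ ε₂) (_ : ε₁ + ε₂ = ε + η)
      (u : U) (_ : u ∈ Iset F ε₁ x),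
      Prod.fst '' epsSubdiff2 (F u) ε₂ (x, (0 : Y u))

/-- `D^ε(x)`. -/
def Dset (F : ∀ u, X × Y u → EReal) (ε : ℝ) (x : X) : Set (X →L[ℝ] ℝ) :=
  ⋃ (ε₁ : ℝ) (ε₂ : ℝ) (_ : 0 ≤ ε₁) (_ : 0 ≤ ε₂) (_ : ε₁ + ε₂ = ε)
    (u : U) (_ : u ∈ Iset F ε₁ x),
    Prod.fst '' epsSubdiff2 (F u) ε₂ (x, (0 : Y u))

/-- The exact active index set `I(x) := {u : F_u(x,0) = p(x)}` (when `p(x) ∈ ℝ`). -/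
def I0set (F : ∀ u, X × Y u → EReal) (x : X) : Set U :=
  {u | (∃ r : ℝ, pRob F x = (r : EReal)) ∧ F u (x, 0) = pRob F x}

/-- `D(x) := ⋃_{u ∈ I(x)} proj_{X*} ∂F_u(x, 0)`. -/
def D0set (F : ∀ u, X × Y u → EReal) (x : X) : Set (X →L[ℝ] ℝ) :=
  ⋃ (u : U) (_ : u ∈ I0set F x), Prod.fst '' epsSubdiff2 (F u) 0 (x, (0 : Y u))

/-- `B_{(u,y*)}(x*) := {x ∈ J(u) : (x, 0) ∈ (M F_u)(x*, y*)}`. -/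
def B0set (F : ∀ u, X × Y u → EReal) (u : U) (ys : Y u →L[ℝ] ℝ)
    (xs : X →L[ℝ] ℝ) : Set X :=
  {x | (∃ r : ℝ, pRob F x = (r : EReal)) ∧ F u (x, 0) = pRob F x ∧
    (x, (0 : Y u)) ∈ M2 (F u) 0 xs ys}

set_option linter.unusedSectionVars false

-- AUX

lemma ereal_neg_iSup {ι : Sort*} (f : ι → EReal) : -⨆ i, f i = ⨅ i, -f i := by
  refine le_antisymm (le_iInf fun i => EReal.neg_le_neg_iff.2 (le_iSup f i)) ?_
  exact EReal.le_neg_of_le_neg (iSup_le fun i => EReal.le_neg_of_le_neg (iInf_le _ i))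

lemma ereal_neg_coe_sub (c : ℝ) (a : EReal) : -((c : EReal) - a) = a - (c : EReal) := by
  rw [EReal.neg_sub (Or.inl (EReal.coe_ne_bot c)) (Or.inl (EReal.coe_ne_top c)),
    sub_eq_add_neg, add_comm]

lemma iInf_sub_coe {ι : Sort*} (h : ι → EReal) (c : ι → ℝ) :
    ⨅ i, (h i - (c i : EReal)) = -⨆ i, ((c i : EReal) - h i) := by
  rw [ereal_neg_iSup]
  exact iInf_congr fun i => (ereal_neg_coe_sub (c i) (h i)).symm

lemma ereal_real_of (a : EReal) (h1 : a ≠ ⊥) (h2 : a ≠ ⊤) : ∃ r : ℝ, a = (r : EReal) :=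
  ⟨a.toReal, (EReal.coe_toReal h2 h1).symm⟩

lemma sub_coe_real_iff (a : EReal) (c : ℝ) :
    (∃ r : ℝ, a - (c : EReal) = (r : EReal)) ↔ ∃ r : ℝ, a = (r : EReal) := by
  induction a using EReal.rec with
  | bot => simp [EReal.bot_sub]
  | coe t => exact iff_of_true ⟨t - c, (EReal.coe_sub t c).symm⟩ ⟨t, rfl⟩
  | top => simp [EReal.top_sub_coe]

lemma mem_Bset_iff (F : ∀ u, X × Y u → EReal) (ε : ℝ) (u : U) (ys : Y u →L[ℝ] ℝ)
    (xs : X →L[ℝ] ℝ) (x : X) :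
    x ∈ Bset F ε u ys xs ↔ ∃ ε₁ ε₂ : ℝ, 0 ≤ ε₁ ∧ 0 ≤ ε₂ ∧ ε₁ + ε₂ = ε ∧
      ((∃ r : ℝ, pRob F x = (r : EReal)) ∧ pRob F x ≤ F u (x, 0) + (ε₁ : EReal)) ∧
      ((∃ s : ℝ, F u (x, 0) = (s : EReal)) ∧
        F u (x, 0) - ((xs x + ys 0 : ℝ) : EReal) ≤
          (⨅ z : X × Y u, F u z - ((xs z.1 + ys z.2 : ℝ) : EReal)) + (ε₂ : EReal)) := by
  simp only [Bset, Set.mem_iUnion, Aset, Jset, M2, epsArgmin, Set.mem_setOf_eq,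
    sub_coe_real_iff]
  constructor
  · rintro ⟨ε₁, ε₂, h1, h2, h3, ⟨h4, h5⟩, h6, h7⟩
    exact ⟨ε₁, ε₂, h1, h2, h3, ⟨h4, h5⟩, h6, h7⟩
  · rintro ⟨ε₁, ε₂, h1, h2, h3, ⟨h4, h5⟩, h6, h7⟩
    exact ⟨ε₁, ε₂, h1, h2, h3, ⟨h4, h5⟩, h6, h7⟩

lemma mem_M1_iff (h : X → EReal) (ε : ℝ) (xs : X →L[ℝ] ℝ) (x : X) :
    x ∈ M1 h ε xs ↔ (∃ r : ℝ, h x = (r : EReal)) ∧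
      h x - ((xs x : ℝ) : EReal) ≤ (⨅ w, h w - ((xs w : ℝ) : EReal)) + (ε : EReal) := by
  simp only [M1, epsArgmin, Set.mem_setOf_eq, sub_coe_real_iff]


/-- Theorem 4.1 (strong robust duality). -/
theorem strong_robust_duality_iff_M_eq_Bset
    (F : ∀ u, X × Y u → EReal) (hU : Nonempty U) (hF : ∀ u z, F u z ≠ ⊥)
    (hdomp : ∃ xbar : X, ∃ r : ℝ, pRob F xbar = (r : EReal)) (xs : X →L[ℝ] ℝ) :
    List.TFAE
      [∃ (u : U) (ys : Y u →L[ℝ] ℝ),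
         conj1 (pRob F) xs = conj2 (F u) xs ys ∧ conj2 (F u) xs ys = qRob F xs,
       ∃ (u : U) (ys : Y u →L[ℝ] ℝ),
         ∀ ε : ℝ, 0 ≤ ε → M1 (pRob F) ε xs = Bset F ε u ys xs,
       ∃ εbar : ℝ, 0 < εbar ∧ ∃ (u : U) (ys : Y u →L[ℝ] ℝ),
         ∀ ε : ℝ, 0 < ε → ε < εbar → M1 (pRob F) ε xs = Bset F ε u ys xs] := by
  obtain ⟨xb, rb, hxb⟩ := hdomp
  -- p never ⊥
  have hpne : ∀ x, pRob F x ≠ ⊥ := fun x h => hF hU.some (x, 0)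
    (le_bot_iff.1 (h ▸ le_iSup (fun u => F u (x, 0)) hU.some))
  have hle1 : ∀ x : X, ((xs x : ℝ) : EReal) - pRob F x ≤ conj1 (pRob F) xs := fun x =>
    le_iSup (fun x => ((xs x : ℝ) : EReal) - pRob F x) x
  have hle2 : ∀ (u : U) (ys : Y u →L[ℝ] ℝ) (x : X),
      ((xs x + ys 0 : ℝ) : EReal) - F u (x, 0) ≤ conj2 (F u) xs ys := fun u ys x =>
    le_iSup (fun z : X × Y u => ((xs z.1 + ys z.2 : ℝ) : EReal) - F u z) (x, 0)
  -- A ≠ ⊥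
  have hAbot : conj1 (pRob F) xs ≠ ⊥ := by
    intro h
    have h2 := hle1 xb
    rw [h, hxb, ← EReal.coe_sub, le_bot_iff] at h2
    exact EReal.coe_ne_bot _ h2
  have hinf1 : (⨅ w, pRob F w - ((xs w : ℝ) : EReal)) = -conj1 (pRob F) xs :=
    iInf_sub_coe _ _
  have hinf2 : ∀ (u : U) (ys : Y u →L[ℝ] ℝ),
      (⨅ z : X × Y u, F u z - ((xs z.1 + ys z.2 : ℝ) : EReal)) = -conj2 (F u) xs ys :=
    fun u ys => iInf_sub_coe _ _
  -- weak duality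
  have hweak : ∀ (u : U) (ys : Y u →L[ℝ] ℝ), conj1 (pRob F) xs ≤ conj2 (F u) xs ys := by
    intro u ys
    refine iSup_le fun x => ?_
    have h1 : F u (x, 0) ≤ pRob F x := le_iSup (fun u => F u (x, 0)) u
    calc ((xs x : ℝ) : EReal) - pRob F x ≤ ((xs x : ℝ) : EReal) - F u (x, 0) :=
          EReal.sub_le_sub le_rfl h1
      _ = ((xs x + ys 0 : ℝ) : EReal) - F u (x, 0) := by rw [map_zero, add_zero]
      _ ≤ conj2 (F u) xs ys := hle2 u ys x
  have hq1 : conj1 (pRob F) xs ≤ qRob F xs := le_iInf fun u => le_iInf fun ys => hweak u ys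
  -- conj2 is real whenever it shows up in a nonvacuous M2 condition
  have hBreal : ∀ (u : U) (ys : Y u →L[ℝ] ℝ) (x : X) (s ε₂ : ℝ), F u (x, 0) = (s : EReal) →
      F u (x, 0) - ((xs x + ys 0 : ℝ) : EReal) ≤
        (⨅ z : X × Y u, F u z - ((xs z.1 + ys z.2 : ℝ) : EReal)) + (ε₂ : EReal) →
      ∃ b : ℝ, conj2 (F u) xs ys = (b : EReal) ∧ s - xs x ≤ -b + ε₂ := by
    intro u ys x s ε₂ hs hM
    rw [hinf2, map_zero, add_zero, hs] at hM
    have hBne : conj2 (F u) xs ys ≠ ⊥ := by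
      intro hb
      have h2 := hle2 u ys x
      rw [hb, hs, ← EReal.coe_sub, le_bot_iff] at h2
      exact EReal.coe_ne_bot _ h2
    have hBnt : conj2 (F u) xs ys ≠ ⊤ := by
      intro hb
      rw [hb, EReal.neg_top, EReal.bot_add, ← EReal.coe_sub, le_bot_iff] at hM
      exact EReal.coe_ne_bot _ hM
    obtain ⟨b, hb⟩ := ereal_real_of _ hBne hBnt
    rw [hb, ← EReal.coe_neg, ← EReal.coe_add, ← EReal.coe_sub, EReal.coe_le_coe_iff] at hM
    exact ⟨b, hb, hM⟩
  -- B ⊆ M1, unconditionally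
  have hBM : ∀ (u : U) (ys : Y u →L[ℝ] ℝ) (ε : ℝ),
      Bset F ε u ys xs ⊆ M1 (pRob F) ε xs := by
    intro u ys ε x hx
    rw [mem_Bset_iff] at hx
    obtain ⟨ε₁, ε₂, hε₁, hε₂, hsum, ⟨⟨r, hr⟩, hJ⟩, ⟨⟨s, hs⟩, hM⟩⟩ := hx
    obtain ⟨b, hb, hbs⟩ := hBreal u ys x s ε₂ hs hM
    rw [hr, hs, ← EReal.coe_add, EReal.coe_le_coe_iff] at hJ
    rw [mem_M1_iff]
    refine ⟨⟨r, hr⟩, ?_⟩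
    rw [hinf1, hr, ← EReal.coe_sub]
    have hAb : ((-b : ℝ) : EReal) + (ε : EReal) ≤ -conj1 (pRob F) xs + (ε : EReal) := by
      refine add_le_add ?_ le_rfl
      rw [EReal.coe_neg]
      exact EReal.neg_le_neg_iff.2 (hb ▸ hweak u ys)
    refine le_trans ?_ hAb
    rw [← EReal.coe_add, EReal.coe_le_coe_iff]
    linarith
  -- M1 ⊆ B, given conjugate equality
  have hMB : ∀ (u : U) (ys : Y u →L[ℝ] ℝ), conj1 (pRob F) xs = conj2 (F u) xs ys →
      ∀ ε : ℝ, M1 (pRob F) ε xs ⊆ Bset F ε u ys xs := by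
    intro u ys hAB ε x hx
    rw [mem_M1_iff] at hx
    obtain ⟨⟨r, hr⟩, hle⟩ := hx
    rw [hinf1, hr, ← EReal.coe_sub] at hle
    have hAnt : conj1 (pRob F) xs ≠ ⊤ := by
      intro h
      rw [h, EReal.neg_top, EReal.bot_add, le_bot_iff] at hle
      exact EReal.coe_ne_bot _ hle
    obtain ⟨a, ha⟩ := ereal_real_of _ hAbot hAnt
    rw [ha, ← EReal.coe_neg, ← EReal.coe_add, EReal.coe_le_coe_iff] at hle
    have hFle : F u (x, 0) ≤ (r : EReal) := hr ▸ le_iSup (fun u => F u (x, 0)) u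
    obtain ⟨s, hs⟩ := ereal_real_of (F u (x, 0)) (hF u _)
      (fun h => (EReal.coe_ne_top r) (top_le_iff.1 (h ▸ hFle)))
    have hsr : s ≤ r := EReal.coe_le_coe_iff.1 (hs ▸ hFle)
    have hconj : xs x - s ≤ a := by
      have h2 := hle2 u ys x
      rw [← hAB, ha, map_zero, add_zero, hs, ← EReal.coe_sub, EReal.coe_le_coe_iff] at h2
      exact h2
    rw [mem_Bset_iff]
    refine ⟨r - s, ε - (r - s), by linarith, by linarith, by ring, ⟨⟨r, hr⟩, ?_⟩, ⟨⟨s, hs⟩, ?_⟩⟩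
    · rw [hr, hs, ← EReal.coe_add, EReal.coe_le_coe_iff]; linarith
    · rw [hinf2, ← hAB, ha, map_zero, add_zero, hs, ← EReal.coe_neg, ← EReal.coe_add,
        ← EReal.coe_sub, EReal.coe_le_coe_iff]
      linarith
  -- (iii) core
  have key2 : ∀ (εbar : ℝ), 0 < εbar → ∀ (u : U) (ys : Y u →L[ℝ] ℝ),
      (∀ ε : ℝ, 0 < ε → ε < εbar → M1 (pRob F) ε xs = Bset F ε u ys xs) →
      conj2 (F u) xs ys ≤ conj1 (pRob F) xs := by
    intro εbar hεbar u ys h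
    by_cases hAnt : conj1 (pRob F) xs = ⊤
    · exact hAnt ▸ le_top
    obtain ⟨a, ha⟩ := ereal_real_of _ hAbot hAnt
    have claim : ∀ ε : ℝ, 0 < ε → ε < εbar →
        conj2 (F u) xs ys ≤ ((a + ε : ℝ) : EReal) := by
      intro ε hε hεb
      have hlt : ((a - ε / 2 : ℝ) : EReal) < conj1 (pRob F) xs := by
        rw [ha, EReal.coe_lt_coe_iff]; linarith
      rw [conj1, lt_iSup_iff] at hlt
      obtain ⟨x, hx⟩ := hlt
      have hpnt : pRob F x ≠ ⊤ := by
        intro htop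
        rw [htop, EReal.sub_top] at hx
        exact not_lt_bot hx
      obtain ⟨r, hr⟩ := ereal_real_of (pRob F x) (hpne x) hpnt
      rw [hr, ← EReal.coe_sub, EReal.coe_lt_coe_iff] at hx
      have hub : xs x - r ≤ a := by
        have h2 := hle1 x
        rw [ha, hr, ← EReal.coe_sub, EReal.coe_le_coe_iff] at h2
        exact h2
      have hxM : x ∈ M1 (pRob F) ε xs := by
        rw [mem_M1_iff]
        refine ⟨⟨r, hr⟩, ?_⟩
        rw [hinf1, hr, ha, ← EReal.coe_sub, ← EReal.coe_neg, ← EReal.coe_add,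
          EReal.coe_le_coe_iff]
        linarith
      rw [h ε hε hεb, mem_Bset_iff] at hxM
      obtain ⟨ε₁, ε₂, hε₁, hε₂, hsum, ⟨⟨r', hr'⟩, hJ⟩, ⟨⟨s, hs⟩, hM⟩⟩ := hxM
      have hrr : r' = r := by
        rw [hr] at hr'
        exact EReal.coe_eq_coe_iff.1 hr'.symm
      obtain ⟨b, hb, hbs⟩ := hBreal u ys x s ε₂ hs hM
      rw [hr, hs, ← EReal.coe_add, EReal.coe_le_coe_iff] at hJ
      rw [hb, EReal.coe_le_coe_iff]
      linarith
    rw [ha]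
    by_contra hlt
    push_neg at hlt
    have hBne : conj2 (F u) xs ys ≠ ⊥ := fun hbb => by
      rw [hbb] at hlt; exact not_lt_bot hlt
    have hBnt : conj2 (F u) xs ys ≠ ⊤ := by
      intro hbt
      have h2 := claim (εbar / 2) (by linarith) (by linarith)
      rw [hbt, top_le_iff] at h2
      exact EReal.coe_ne_top _ h2
    obtain ⟨b, hb⟩ := ereal_real_of _ hBne hBnt
    have hab : a < b := EReal.coe_lt_coe_iff.1 (hb ▸ hlt)
    have hε : 0 < min (εbar / 2) ((b - a) / 2) := lt_min (by linarith) (by linarith)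
    have hc := claim _ hε (lt_of_le_of_lt (min_le_left _ _) (by linarith))
    rw [hb, EReal.coe_le_coe_iff] at hc
    have hm := min_le_right (εbar / 2) ((b - a) / 2)
    linarith
  tfae_have 1 → 2 := by
    rintro ⟨u, ys, h1, _⟩
    exact ⟨u, ys, fun ε _ => le_antisymm (hMB u ys h1 ε) (hBM u ys ε)⟩
  tfae_have 2 → 3 := by
    rintro ⟨u, ys, h⟩
    exact ⟨1, one_pos, u, ys, fun ε hε _ => h ε hε.le⟩
  tfae_have 3 → 1 := by
    rintro ⟨εbar, hεbar, u, ys, h⟩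
    have hBA := key2 εbar hεbar u ys h
    have hAB : conj1 (pRob F) xs = conj2 (F u) xs ys := le_antisymm (hweak u ys) hBA
    have hqB : qRob F xs ≤ conj2 (F u) xs ys := le_trans (iInf_le _ u) (iInf_le _ ys)
    exact ⟨u, ys, hAB, le_antisymm (hAB ▸ hq1) hqB⟩
  tfae_finish
end RobustDuality
end
end

section
/- Let x* ∈ X* be such that (Mp)(x*) := (M⁰p)(x*) = argmin(p − x*) is nonempty. Then the following are equivalent: (i) reverse strong robust duality holds at x*, i.e., the (attained) minimum of p − x* over X equals −q(x*) (equivalently p*(x*) = q(x*)); (ii) (Mp)(x*) = 𝒜(x*), where 𝒜(x*) := 𝒜⁰(x*) = ⋂_{η>0} ⋃_{u∈U, y_u*∈Y_u*} ⋃_{ε₁,ε₂≥0, ε₁+ε₂=η} {x ∈ J^{ε₁}(u) : (x, 0_u) ∈ (M^{ε₂}F_u)(x*, y_u*)}. -/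
noncomputable section

namespace RobustDuality

variable {X : Type*} [AddCommGroup X] [Module ℝ X] [TopologicalSpace X]
  [IsTopologicalAddGroup X] [ContinuousSMul ℝ X] [LocallyConvexSpace ℝ X] [T2Space X]

variable {U : Type*} {Y : U → Type*} [∀ u, AddCommGroup (Y u)] [∀ u, Module ℝ (Y u)]
  [∀ u, TopologicalSpace (Y u)] [∀ u, IsTopologicalAddGroup (Y u)]
  [∀ u, ContinuousSMul ℝ (Y u)] [∀ u, LocallyConvexSpace ℝ (Y u)] [∀ u, T2Space (Y u)]

set_option linter.unusedSectionVars false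
set_option maxHeartbeats 1000000

lemma ereal_iSup_neg' {ι : Sort*} (f : ι → EReal) : (⨆ i, -(f i)) = -⨅ i, f i := by
  apply le_antisymm
  · exact iSup_le fun i => EReal.neg_le_neg_iff.2 (iInf_le _ i)
  · rw [EReal.neg_le]
    exact le_iInf fun i => EReal.neg_le.1 (le_iSup (fun i => -f i) i)

lemma ereal_le_of_forall_add' {a b : EReal} (h : ∀ η : ℝ, 0 < η → a ≤ b + (η : EReal)) :
    a ≤ b := by
  induction b with
  | bot => simpa using h 1 one_pos
  | coe r =>
    rw [← EReal.le_of_forall_lt_iff_le]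
    intro z hz
    have h2 := h (z - r) (by exact_mod_cast sub_pos.2 (by exact_mod_cast hz))
    calc a ≤ (r : EReal) + ((z - r : ℝ) : EReal) := h2
    _ = (z : EReal) := by norm_cast; ring
  | top => exact le_top

lemma ereal_exists_real {a : EReal} (h1 : a ≠ ⊥) (h2 : a ≠ ⊤) : ∃ r : ℝ, a = (r : EReal) :=
  ⟨a.toReal, (EReal.coe_toReal h2 h1).symm⟩

lemma ereal_eq_of_sub_coe {a : EReal} {b s : ℝ} (h : a - (b : EReal) = (s : EReal)) :
    a = ((s + b : ℝ) : EReal) := by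
  induction a with
  | bot => simp [EReal.bot_sub] at h
  | coe t => norm_cast at h ⊢; linarith
  | top => simp [EReal.top_sub_coe] at h

section MainProof

variable {U : Type*} {Y : U → Type*} [∀ u, AddCommGroup (Y u)] [∀ u, Module ℝ (Y u)]
  [∀ u, TopologicalSpace (Y u)] [∀ u, IsTopologicalAddGroup (Y u)]
  [∀ u, ContinuousSMul ℝ (Y u)] [∀ u, LocallyConvexSpace ℝ (Y u)] [∀ u, T2Space (Y u)]

lemma pRob_ne_bot (F : ∀ u, X × Y u → EReal) (hU : Nonempty U)
    (hF : ∀ u z, F u z ≠ ⊥) (x : X) : pRob F x ≠ ⊥ := by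
  obtain ⟨u⟩ := hU
  intro h
  exact hF u (x, 0) (le_bot_iff.1 (h ▸ le_iSup (fun u => F u (x, 0)) u))

lemma conj1_eq (F : ∀ u, X × Y u → EReal) (hU : Nonempty U)
    (hF : ∀ u z, F u z ≠ ⊥) (xs : X →L[ℝ] ℝ) :
    conj1 (pRob F) xs = -⨅ x, (pRob F x - ((xs x : ℝ) : EReal)) := by
  rw [← ereal_iSup_neg']
  refine iSup_congr fun x => ?_
  rw [EReal.neg_sub (Or.inl (pRob_ne_bot F hU hF x)) (Or.inr (EReal.coe_ne_top _)),
    sub_eq_add_neg, add_comm]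

lemma conj2_eq {Yu : Type*} [AddCommGroup Yu] [Module ℝ Yu] [TopologicalSpace Yu]
    [IsTopologicalAddGroup Yu] [ContinuousSMul ℝ Yu] [LocallyConvexSpace ℝ Yu] [T2Space Yu]
    (G : X × Yu → EReal) (hG : ∀ z, G z ≠ ⊥) (xs : X →L[ℝ] ℝ) (ys : Yu →L[ℝ] ℝ) :
    conj2 G xs ys = -⨅ z : X × Yu, (G z - ((xs z.1 + ys z.2 : ℝ) : EReal)) := by
  rw [← ereal_iSup_neg']
  refine iSup_congr fun z => ?_
  rw [EReal.neg_sub (Or.inl (hG z)) (Or.inr (EReal.coe_ne_top _)),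
    sub_eq_add_neg, add_comm]

lemma qRob_le (F : ∀ u, X × Y u → EReal) (xs : X →L[ℝ] ℝ) (u : U) (ys : Y u →L[ℝ] ℝ) :
    qRob F xs ≤ conj2 (F u) xs ys := by
  unfold qRob
  exact iInf_le_of_le u (iInf_le _ ys)

lemma le_conj2 {Yu : Type*} [AddCommGroup Yu] [Module ℝ Yu] [TopologicalSpace Yu]
    [IsTopologicalAddGroup Yu] [ContinuousSMul ℝ Yu] [LocallyConvexSpace ℝ Yu] [T2Space Yu]
    (G : X × Yu → EReal) (xs : X →L[ℝ] ℝ) (ys : Yu →L[ℝ] ℝ) (z : X × Yu) :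
    ((xs z.1 + ys z.2 : ℝ) : EReal) - G z ≤ conj2 G xs ys := by
  unfold conj2
  exact le_iSup (fun z : X × Yu => ((xs z.1 + ys z.2 : ℝ) : EReal) - G z) z

lemma le_pRob (F : ∀ u, X × Y u → EReal) (x : X) (u : U) :
    F u (x, 0) ≤ pRob F x := by
  unfold pRob
  exact le_iSup (fun u => F u (x, 0)) u

lemma weak_duality (F : ∀ u, X × Y u → EReal) (xs : X →L[ℝ] ℝ) :
    conj1 (pRob F) xs ≤ qRob F xs := by
  refine le_iInf fun u => le_iInf fun ys => iSup_le fun x => ?_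
  refine le_iSup_of_le (x, (0 : Y u)) ?_
  simp only [map_zero, add_zero]
  exact EReal.sub_le_sub le_rfl (le_pRob F x u)

/-- Membership in `calA F 0 xs` gives the key estimate. -/
lemma calA_estimate (F : ∀ u, X × Y u → EReal) (hU : Nonempty U)
    (hF : ∀ u z, F u z ≠ ⊥) (xs : X →L[ℝ] ℝ) {x : X} (hx : x ∈ calA F 0 xs) :
    (∃ r : ℝ, pRob F x = (r : EReal)) ∧
      pRob F x - ((xs x : ℝ) : EReal) ≤ -qRob F xs := by
  have hx' := hx
  simp only [calA, Set.mem_iInter, Set.mem_iUnion] at hx'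
  have key : ∀ η : ℝ, 0 < η →
      pRob F x - ((xs x : ℝ) : EReal) ≤ -qRob F xs + (η : EReal) := by
    intro η hη
    obtain ⟨u, ys, ε₁, ε₂, h1, h2, h3, hA⟩ := hx' η hη
    obtain ⟨⟨⟨r, hr⟩, hJ⟩, ⟨A, hAr⟩, hM2⟩ := hA
    simp only [map_zero, add_zero] at hAr hM2
    have hinf : (⨅ w : X × Y u, (F u w - ((xs w.1 + ys w.2 : ℝ) : EReal)))
        = -conj2 (F u) xs ys := by
      rw [conj2_eq (F u) (hF u) xs ys, neg_neg]
    rw [hinf] at hM2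
    have hq : -conj2 (F u) xs ys ≤ -qRob F xs :=
      EReal.neg_le_neg_iff.2 (qRob_le F xs u ys)
    have hFA : F u (x, 0) = ((A + xs x : ℝ) : EReal) := ereal_eq_of_sub_coe hAr
    have step1 : pRob F x - ((xs x : ℝ) : EReal)
        ≤ (F u (x, 0) - ((xs x : ℝ) : EReal)) + (ε₁ : EReal) := by
      rw [hr, hFA] at hJ ⊢
      have hJ' : r ≤ (A + xs x) + ε₁ := by exact_mod_cast hJ
      rw [← EReal.coe_sub, ← EReal.coe_sub, ← EReal.coe_add, EReal.coe_le_coe_iff]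
      linarith
    calc pRob F x - ((xs x : ℝ) : EReal)
        ≤ (F u (x, 0) - ((xs x : ℝ) : EReal)) + (ε₁ : EReal) := step1
    _ ≤ (-conj2 (F u) xs ys + (ε₂ : EReal)) + (ε₁ : EReal) := add_le_add_left hM2 _
    _ ≤ (-qRob F xs + (ε₂ : EReal)) + (ε₁ : EReal) :=
        add_le_add_left (add_le_add_left hq _) _
    _ = -qRob F xs + (η : EReal) := by
        rw [add_assoc, ← EReal.coe_add, add_comm ε₂ ε₁, h3, zero_add]
  obtain ⟨u, ys, ε₁, ε₂, h1, h2, h3, hA⟩ := hx' 1 one_pos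
  exact ⟨hA.1.1, ereal_le_of_forall_add' key⟩

end MainProof

/-- Theorem 5.1 (reverse strong robust duality). -/
theorem reverse_strong_robust_duality_iff
    (F : ∀ u, X × Y u → EReal) (hU : Nonempty U) (hF : ∀ u z, F u z ≠ ⊥)
    (xs : X →L[ℝ] ℝ) (hM : (M1 (pRob F) 0 xs).Nonempty) :
    conj1 (pRob F) xs = qRob F xs ↔ M1 (pRob F) 0 xs = calA F 0 xs := by
  classical
  have hconj : conj1 (pRob F) xs = -⨅ w, (pRob F w - ((xs w : ℝ) : EReal)) :=
    conj1_eq F hU hF xs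
  obtain ⟨x₀, hx₀mem⟩ := hM
  obtain ⟨-, hx₀le⟩ := id hx₀mem
  simp only [EReal.coe_zero, add_zero] at hx₀le
  have hIle : (⨅ w, (pRob F w - ((xs w : ℝ) : EReal))) ≤ pRob F x₀ - ((xs x₀ : ℝ) : EReal) :=
    iInf_le _ x₀
  constructor
  · intro hq
    ext x
    constructor
    · -- M1 ⊆ calA
      intro hxM
      obtain ⟨⟨s, hs⟩, hxle⟩ := hxM
      simp only [EReal.coe_zero, add_zero] at hs hxle
      have hxeq : pRob F x - ((xs x : ℝ) : EReal)
          = ⨅ w, (pRob F w - ((xs w : ℝ) : EReal)) :=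
        le_antisymm hxle (iInf_le _ x)
      have hrp : pRob F x = ((s + xs x : ℝ) : EReal) := ereal_eq_of_sub_coe hs
      have hqQ : qRob F xs = ((-s : ℝ) : EReal) := by
        rw [← hq, hconj, ← hxeq, hs, ← EReal.coe_neg]
      simp only [calA, Set.mem_iInter, Set.mem_iUnion]
      intro η hη
      have hlt : qRob F xs < ((-s + η / 2 : ℝ) : EReal) := by
        rw [hqQ]; exact_mod_cast (by linarith : -s < -s + η / 2)
      obtain ⟨u, hu⟩ := iInf_lt_iff.1 (by rw [qRob] at hlt; exact hlt)
      obtain ⟨ys, hys⟩ := iInf_lt_iff.1 hu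
      have hgeQ : ((-s : ℝ) : EReal) ≤ conj2 (F u) xs ys := hqQ ▸ qRob_le F xs u ys
      obtain ⟨C, hC⟩ : ∃ C : ℝ, conj2 (F u) xs ys = (C : EReal) :=
        ereal_exists_real (fun hb => by simp [hb] at hgeQ) (hys.trans_le le_top).ne
      have hQC : -s ≤ C := by rw [hC] at hgeQ; exact_mod_cast hgeQ
      have hCQ : C < -s + η / 2 := by rw [hC] at hys; exact_mod_cast hys
      have haler : F u (x, 0) ≤ ((s + xs x : ℝ) : EReal) := hrp ▸ le_pRob F x u
      obtain ⟨A, hA⟩ : ∃ A : ℝ, F u (x, 0) = (A : EReal) :=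
        ereal_exists_real (hF u _) (haler.trans_lt (EReal.coe_lt_top _)).ne
      have hAr : A ≤ s + xs x := by rw [hA] at haler; exact_mod_cast haler
      have hkey : xs x - A ≤ C := by
        have h0 := le_conj2 (F u) xs ys (x, (0 : Y u))
        simp only [map_zero, add_zero] at h0
        rw [hA, hC, ← EReal.coe_sub] at h0
        exact_mod_cast h0
      have hinf : (⨅ w : X × Y u, (F u w - ((xs w.1 + ys w.2 : ℝ) : EReal)))
          = -conj2 (F u) xs ys := by
        rw [conj2_eq (F u) (hF u) xs ys, neg_neg]
      refine ⟨u, ys, η - (A - xs x + C), A - xs x + C,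
        by linarith, by linarith, by ring,
        ⟨⟨s + xs x, hrp⟩, ?_⟩, ⟨A - xs x, ?_⟩, ?_⟩
      · -- Jset inequality
        rw [hrp, hA, ← EReal.coe_add, EReal.coe_le_coe_iff]
        linarith
      · -- M2 finiteness
        show F u (x, (0 : Y u)) - ((xs x + ys 0 : ℝ) : EReal) = ((A - xs x : ℝ) : EReal)
        rw [hA, map_zero, add_zero, ← EReal.coe_sub]
      · -- M2 inequality
        simp only [map_zero, add_zero]
        rw [hinf, hC, hA, ← EReal.coe_neg, ← EReal.coe_sub, ← EReal.coe_add,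
          EReal.coe_le_coe_iff]
        linarith
    · -- calA ⊆ M1
      intro hxA
      obtain ⟨⟨r, hr⟩, hle⟩ := calA_estimate F hU hF xs hxA
      refine ⟨⟨r - xs x, by show pRob F x - ((xs x : ℝ) : EReal) = ((r - xs x : ℝ) : EReal); rw [hr, ← EReal.coe_sub]⟩, ?_⟩
      simp only [EReal.coe_zero, add_zero]
      calc pRob F x - ((xs x : ℝ) : EReal) ≤ -qRob F xs := hle
      _ = ⨅ w, (pRob F w - ((xs w : ℝ) : EReal)) := by rw [← hq, hconj, neg_neg]
  · intro hset
    refine le_antisymm (weak_duality F xs) ?_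
    have hx₀A : x₀ ∈ calA F 0 xs := hset ▸ hx₀mem
    have h2 := (calA_estimate F hU hF xs hx₀A).2
    have h3 : (⨅ w, (pRob F w - ((xs w : ℝ) : EReal))) ≤ -qRob F xs := hIle.trans h2
    rw [hconj]
    exact EReal.le_neg_of_le_neg h3

end RobustDuality
end
end

section
/- Let x* ∈ X* be such that (Mp)(x*) := (M⁰p)(x*) = argmin(p − x*) is nonempty. Then the following are equivalent: (i) min-max robust duality holds at x*, i.e., there exist u ∈ U and y_u* ∈ Y_u* such that the (attained) minimum of p − x* over X equals −F_u*(x*, y_u*) = −q(x*); (ii) there exist u ∈ U and y_u* ∈ Y_u* such that (Mp)(x*) = B_{(u,y_u*)}(x*), where B_{(u,y_u*)}(x*) := {x ∈ J(u) : (x, 0_u) ∈ (MF_u)(x*, y_u*)}, J(u) := {x ∈ X : p(x) ∈ ℝ and F_u(x, 0_u) = p(x)}, and (MF_u)(x*, y_u*) := argmin(F_u − ⟨x*, ·⟩ − ⟨y_u*, ·⟩). -/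
noncomputable section

namespace RobustDuality

variable {X : Type*} [AddCommGroup X] [Module ℝ X] [TopologicalSpace X]
  [IsTopologicalAddGroup X] [ContinuousSMul ℝ X] [LocallyConvexSpace ℝ X] [T2Space X]

variable {U : Type*} {Y : U → Type*} [∀ u, AddCommGroup (Y u)] [∀ u, Module ℝ (Y u)]
  [∀ u, TopologicalSpace (Y u)] [∀ u, IsTopologicalAddGroup (Y u)]
  [∀ u, ContinuousSMul ℝ (Y u)] [∀ u, LocallyConvexSpace ℝ (Y u)] [∀ u, T2Space (Y u)]

private lemma neg_coe_sub' (r : ℝ) (b : EReal) : -((r : EReal) - b) = b - (r : EReal) := by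
  induction b using EReal.rec with
  | bot => rfl
  | coe s => rw [← EReal.coe_sub, ← EReal.coe_neg, ← EReal.coe_sub]; norm_num
  | top => rfl

private lemma neg_iSup' {ι : Sort*} (f : ι → EReal) : -(⨆ i, f i) = ⨅ i, -f i := by
  apply le_antisymm
  · exact le_iInf fun i => EReal.neg_le_neg_iff.2 (le_iSup f i)
  · exact EReal.le_neg_of_le_neg (iSup_le fun i => EReal.le_neg_of_le_neg (iInf_le _ i))

private lemma sub_cancel_le' {a b : EReal} (r : ℝ) (h : a - (r : EReal) ≤ b - (r : EReal)) :
    a ≤ b := by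
  have := add_le_add_right h (r : EReal)
  rwa [add_comm (r : EReal) (a - _), add_comm (r : EReal) (b - _), EReal.sub_add_cancel,
    EReal.sub_add_cancel] at this

private lemma eq_of_sub_coe' {a : EReal} {r s : ℝ} (h : a - (r : EReal) = (s : EReal)) :
    a = ((s + r : ℝ) : EReal) := by
  have : a - (r : EReal) + (r : EReal) = (s : EReal) + (r : EReal) := by rw [h]
  rwa [EReal.sub_add_cancel, ← EReal.coe_add] at this

/-- Theorem 5.2 (min-max robust duality). -/
theorem minmax_robust_duality_iff
    (F : ∀ u, X × Y u → EReal) (hU : Nonempty U) (hF : ∀ u z, F u z ≠ ⊥)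
    (xs : X →L[ℝ] ℝ) (hM : (M1 (pRob F) 0 xs).Nonempty) :
    (∃ (u : U) (ys : Y u →L[ℝ] ℝ) (xbar : X),
       (pRob F xbar - ((xs xbar : ℝ) : EReal) =
         ⨅ z : X, (pRob F z - ((xs z : ℝ) : EReal))) ∧
       pRob F xbar - ((xs xbar : ℝ) : EReal) = -conj2 (F u) xs ys ∧
       conj2 (F u) xs ys = qRob F xs) ↔
    (∃ (u : U) (ys : Y u →L[ℝ] ℝ), M1 (pRob F) 0 xs = B0set F u ys xs) := by
  obtain ⟨x0, hM1x0⟩ := hM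
  obtain ⟨⟨r0, hr0⟩, hx0le⟩ := hM1x0
  simp only [EReal.coe_zero, add_zero] at hx0le
  have hinf : (⨅ z : X, (pRob F z - ((xs z : ℝ) : EReal))) = (r0 : EReal) := by
    refine le_antisymm ?_ ?_
    · rw [← hr0]; exact iInf_le _ x0
    · rw [← hr0]; exact hx0le
  have hM2inf : ∀ (u : U) (ys : Y u →L[ℝ] ℝ),
      (⨅ z : X × Y u, (F u z - ((xs z.1 + ys z.2 : ℝ) : EReal))) = -conj2 (F u) xs ys := by
    intro u ys
    rw [conj2, neg_iSup']
    exact iInf_congr fun z => (neg_coe_sub' _ _).symm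
  have hweak : ∀ (v : U) (ys : Y v →L[ℝ] ℝ) (z : X),
      -conj2 (F v) xs ys ≤ pRob F z - ((xs z : ℝ) : EReal) := by
    intro v ys z
    have h1 : ((xs z : ℝ) : EReal) - pRob F z ≤ conj2 (F v) xs ys := by
      have h2 : ((xs z : ℝ) : EReal) - pRob F z ≤ ((xs z : ℝ) : EReal) - F v (z, 0) :=
        EReal.sub_le_sub le_rfl (le_iSup (fun u => F u (z, 0)) v)
      refine h2.trans ?_
      have h3 := le_iSup (fun w : X × Y v => (((xs w.1 + ys w.2 : ℝ) : EReal) - F v w))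
        (z, (0 : Y v))
      simpa [conj2] using h3
    calc -conj2 (F v) xs ys ≤ -(((xs z : ℝ) : EReal) - pRob F z) := EReal.neg_le_neg_iff.2 h1
      _ = pRob F z - ((xs z : ℝ) : EReal) := neg_coe_sub' _ _
  constructor
  · rintro ⟨u, ys, xbar, hbar, heq, -⟩
    have hconj : -conj2 (F u) xs ys = (r0 : EReal) := heq.symm.trans (hbar.trans hinf)
    refine ⟨u, ys, Set.eq_of_subset_of_subset ?_ ?_⟩
    · rintro x ⟨⟨s, hs⟩, hxle⟩
      simp only [EReal.coe_zero, add_zero] at hxle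
      have hge : (r0 : EReal) ≤ pRob F x - ((xs x : ℝ) : EReal) := by
        rw [← hinf]; exact iInf_le _ x
      have hvx : pRob F x - ((xs x : ℝ) : EReal) = (r0 : EReal) :=
        le_antisymm (by rw [← hinf]; exact hxle) hge
      have hpx : pRob F x = ((r0 + xs x : ℝ) : EReal) := eq_of_sub_coe' hvx
      have hle1 : F u (x, 0) ≤ pRob F x := le_iSup (fun v => F v (x, 0)) u
      have h3 : (r0 : EReal) ≤ F u (x, 0) - ((xs x : ℝ) : EReal) := by
        have h4 := iInf_le (fun z : X × Y u => F u z - ((xs z.1 + ys z.2 : ℝ) : EReal))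
          (x, (0 : Y u))
        rw [hM2inf u ys, hconj] at h4
        simpa using h4
      have hge1 : pRob F x ≤ F u (x, 0) :=
        sub_cancel_le' (xs x) (by rw [hvx]; exact h3)
      have heq2 : F u (x, 0) = pRob F x := le_antisymm hle1 hge1
      refine ⟨⟨r0 + xs x, hpx⟩, heq2, ⟨r0, ?_⟩, ?_⟩
      · simp only [map_zero, add_zero]
        rw [heq2, hvx]
      · simp only [EReal.coe_zero, add_zero, map_zero]
        rw [heq2, hvx, hM2inf u ys, hconj]
    · rintro x ⟨⟨s, hs⟩, hFx, ⟨t, ht⟩, hle2⟩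
      simp only [map_zero, add_zero, EReal.coe_zero] at ht hle2
      refine ⟨⟨t, ?_⟩, ?_⟩
      · show pRob F x - ((xs x : ℝ) : EReal) = (t : EReal)
        rw [← hFx]; exact ht
      · simp only [EReal.coe_zero, add_zero]
        rw [hM2inf u ys, hconj] at hle2
        rw [← hFx, hinf]; exact hle2
  · rintro ⟨u, ys, hset⟩
    have hx0B : x0 ∈ B0set F u ys xs := by
      rw [← hset]
      refine ⟨⟨r0, hr0⟩, ?_⟩
      simp only [EReal.coe_zero, add_zero]
      exact hx0le
    obtain ⟨-, hFx0, ⟨t, ht0⟩, hle20⟩ := hx0B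
    simp only [map_zero, add_zero, EReal.coe_zero] at ht0 hle20
    rw [hM2inf u ys] at hle20
    have hval0 : F u (x0, 0) - ((xs x0 : ℝ) : EReal) = (r0 : EReal) := by
      rw [hFx0]; exact hr0
    have hconj : -conj2 (F u) xs ys = (r0 : EReal) := by
      refine le_antisymm ?_ ?_
      · rw [← hM2inf u ys, ← hval0]
        simpa using iInf_le (fun z : X × Y u => F u z - ((xs z.1 + ys z.2 : ℝ) : EReal))
          (x0, (0 : Y u))
      · rw [← hval0]; exact hle20
    refine ⟨u, ys, x0, hr0.trans hinf.symm, hr0.trans hconj.symm, ?_⟩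
    refine le_antisymm ?_ (iInf_le_of_le u (iInf_le _ ys))
    refine le_iInf fun v => le_iInf fun ys' => ?_
    have h5 : -conj2 (F v) xs ys' ≤ (r0 : EReal) := by
      rw [← hinf]; exact le_iInf (hweak v ys')
    exact EReal.neg_le_neg_iff.1 (h5.trans_eq hconj.symm)

end RobustDuality
end
end
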